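/- arXiv:1607.07747 — 7 statements merged into one kernel-verified Lean document; each statement's English description precedes it below -/
import Mathlib

section
/- (Helly's Theorem for median algebras) If C₀, …, Cₙ are convex subsets of a median algebra M that pairwise intersect, then their total intersection is nonempty. -/
/-- A median algebra: a set with a ternary median operation satisfying (Med 1)-(Med 3). -/
structure MedianAlgebra (M : Type*) where
  m : M → M → M → M
  comm₁ : ∀ x y z, m x y z = m x z y
  comm₂ : ∀ x y z, m x y z = m y z x
  idem : ∀ x y, m x x y = x
  assoc : ∀ x y z u v, m (m x y z) u v = m x (m y u v) (m z u v)

namespace MedianAlgebra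

variable {M : Type*}

/-- The interval `[x,y] = {z | z = m x y z}`. -/
def I (A : MedianAlgebra M) (x y : M) : Set M := {z | z = A.m x y z}

/-- A subset is convex if it contains the interval between any two of its points. -/
def Conv (A : MedianAlgebra M) (C : Set M) : Prop :=
  ∀ x ∈ C, ∀ y ∈ C, A.I x y ⊆ C

/-- A half space is a convex set with convex complement. -/
def Halfspace (A : MedianAlgebra M) (H : Set M) : Prop :=
  A.Conv H ∧ A.Conv Hᶜ

/-- The convex hull of a set: the intersection of all convex sets containing it. -/
def hull (A : MedianAlgebra M) (X : Set M) : Set M :=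
  ⋂₀ {C | A.Conv C ∧ X ⊆ C}

/-- The separator `Δ(X,Y)`: half spaces containing `X` and disjoint from `Y`. -/
def sep (A : MedianAlgebra M) (X Y : Set M) : Set (Set M) :=
  {H | A.Halfspace H ∧ X ⊆ H ∧ Y ⊆ Hᶜ}

end MedianAlgebra

namespace MedianAlgebra

variable {M : Type*}

lemma absorb (A : MedianAlgebra M) (x y z : M) :
    A.m x y z = A.m x y (A.m x y z) := by
  have h := A.assoc x x y y z
  rw [A.idem x y, A.idem y z] at h
  rw [A.comm₁ x y (A.m x y z)]
  exact h

lemma mem_I (A : MedianAlgebra M) (x y z : M) : A.m x y z ∈ A.I x y :=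
  A.absorb x y z

lemma inter_conv (A : MedianAlgebra M) {C D : Set M} (hC : A.Conv C) (hD : A.Conv D) :
    A.Conv (C ∩ D) := fun x hx y hy z hz =>
  ⟨hC x hx.1 y hy.1 hz, hD x hx.2 y hy.2 hz⟩

lemma tri (A : MedianAlgebra M) {C₁ C₂ C₃ : Set M}
    (h1 : A.Conv C₁) (h2 : A.Conv C₂) (h3 : A.Conv C₃)
    {a b c : M} (ha : a ∈ C₁ ∩ C₂) (hb : b ∈ C₁ ∩ C₃) (hc : c ∈ C₂ ∩ C₃) :
    A.m a b c ∈ C₁ ∩ C₂ ∩ C₃ := by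
  refine ⟨⟨h1 a ha.1 b hb.1 (A.mem_I a b c), h2 a ha.2 c hc.1 ?_⟩, h3 b hb.2 c hc.2 ?_⟩
  · show A.m a b c = A.m a c (A.m a b c)
    rw [A.comm₁ a b c]; exact A.absorb a c b
  · show A.m a b c = A.m b c (A.m a b c)
    rw [A.comm₂ a b c]; exact A.absorb b c a

lemma tri' (A : MedianAlgebra M) {C₁ C₂ C₃ : Set M}
    (h1 : A.Conv C₁) (h2 : A.Conv C₂) (h3 : A.Conv C₃)
    (p12 : (C₁ ∩ C₂).Nonempty) (p13 : (C₁ ∩ C₃).Nonempty) (p23 : (C₂ ∩ C₃).Nonempty) :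
    (C₁ ∩ C₂ ∩ C₃).Nonempty := by
  obtain ⟨a, ha⟩ := p12
  obtain ⟨b, hb⟩ := p13
  obtain ⟨c, hc⟩ := p23
  exact ⟨A.m a b c, A.tri h1 h2 h3 ha hb hc⟩

end MedianAlgebra


/-- Helly's Theorem for median algebras. -/
theorem helly {M : Type*} (A : MedianAlgebra M) (n : ℕ) (C : Fin (n + 1) → Set M)
    (hconv : ∀ i, A.Conv (C i)) (hpair : ∀ i j, (C i ∩ C j).Nonempty) :
    (⋂ i, C i).Nonempty := by
  induction n with
  | zero =>
    obtain ⟨x, hx, -⟩ := hpair 0 0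
    exact ⟨x, Set.mem_iInter.2 fun i => by rw [Fin.eq_zero i]; exact hx⟩
  | succ n ih =>
    set D : Fin (n + 1) → Set M := fun i =>
      C i.castSucc ∩ C (if i.val = n then Fin.last (n + 1) else i.castSucc) with hD
    have hDconv : ∀ i, A.Conv (D i) := fun i => A.inter_conv (hconv _) (hconv _)
    have hDpair : ∀ i j, (D i ∩ D j).Nonempty := by
      intro i j
      by_cases hi : i.val = n <;> by_cases hj : j.val = n
      · have : i = j := Fin.ext (by omega)
        subst this
        rw [Set.inter_self]
        simp only [hD, if_pos hi]
        exact hpair _ _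
      · simp only [hD, if_pos hi, if_neg hj, Set.inter_self]
        exact A.tri' (hconv _) (hconv _) (hconv _) (hpair _ _) (hpair _ _) (hpair _ _)
      · simp only [hD, if_neg hi, if_pos hj, Set.inter_self]
        obtain ⟨x, hx⟩ := A.tri' (hconv j.castSucc) (hconv (Fin.last (n+1)))
          (hconv i.castSucc) (hpair _ _) (hpair _ _) (hpair _ _)
        exact ⟨x, hx.2, hx.1⟩
      · simp only [hD, if_neg hi, if_neg hj, Set.inter_self]
        exact hpair _ _
    obtain ⟨x, hx⟩ := ih D hDconv hDpair
    refine ⟨x, Set.mem_iInter.2 fun j => ?_⟩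
    rcases Nat.lt_or_ge j.val (n + 1) with h | h
    · have hx' := Set.mem_iInter.1 hx ⟨j.val, h⟩
      have : (⟨j.val, h⟩ : Fin (n+1)).castSucc = j := Fin.ext rfl
      rw [hD] at hx'
      exact this ▸ hx'.1
    · have hj : j = Fin.last (n + 1) := Fin.ext (by rw [Fin.val_last]; omega)
      have hx' := Set.mem_iInter.1 hx ⟨n, n.lt_succ_self⟩
      rw [hD] at hx'
      simp only [if_pos rfl] at hx'
      exact hj ▸ hx'.2
end

section
/- (Half-space separation) Let A be a convex subset of a median algebra M and b ∈ M \ A. Then there exists a maximal convex set H with A ⊆ H and b ∉ H, and any such maximal H is a half space, i.e., M \ H is also convex. -/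
namespace MedianAlgebra
variable {M : Type*}

theorem aux_absorb (A : MedianAlgebra M) (x y z : M) :
    A.m x y (A.m x y z) = A.m x y z := by
  conv_lhs => rw [A.comm₂ x y (A.m x y z)]
  conv_lhs => rw [A.comm₂ y (A.m x y z) x]
  conv_lhs => enter [2]; rw [A.comm₂ x y z]
  conv_lhs => enter [2]; rw [A.comm₂ y z x]
  conv_lhs => rw [A.assoc z x y x y]
  conv_lhs => enter [3]; rw [A.idem x y]
  conv_lhs => enter [4]; rw [A.comm₁ y x y]
  conv_lhs => enter [4]; rw [A.idem y x]
  conv_lhs => rw [A.comm₂ z x y]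

theorem aux_left (A : MedianAlgebra M) (x y : M) : A.m x y x = x := by
  rw [A.comm₁ x y x, A.idem x y]

theorem aux_right (A : MedianAlgebra M) (x y : M) : A.m x y y = y := by
  rw [A.comm₂ x y y, A.idem y x]

theorem aux_L1 (A : MedianAlgebra M) (v q b p : M) (h : b = A.m v q b) :
    A.m v (A.m b p q) b = b := by
  conv_lhs => enter [4]; rw [h]
  conv_lhs => enter [3]; rw [A.comm₂ b p q]
  conv_lhs => enter [3]; rw [A.comm₁ p q b]
  conv_lhs => enter [4]; rw [A.comm₁ v q b]
  conv_lhs => rw [← A.assoc v p v b q]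
  conv_lhs => enter [2]; rw [A.comm₁ v p v]
  conv_lhs => enter [2]; rw [A.idem v p]
  conv_lhs => rw [A.comm₁ v b q]
  conv_lhs => rw [← h]

theorem aux_q1 (A : MedianAlgebra M) (u g h a c t : M)
    (e1 : a = A.m u g a) (e2 : c = A.m u h c) (e3 : t = A.m a c t) :
    A.m u (A.m g h t) t = t := by
  conv_lhs => rw [A.comm₂ u (A.m g h t) t]
  conv_lhs => rw [A.comm₁ (A.m g h t) t u]
  conv_lhs => enter [2]; rw [A.comm₂ g h t]
  conv_lhs => enter [2]; rw [A.comm₂ h t g]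
  conv_lhs => rw [A.assoc t g h u t]
  conv_lhs => enter [2]; rw [e3]
  conv_lhs => enter [2, 2]; rw [e1]
  conv_lhs => enter [2, 2]; rw [A.comm₂ u g a]
  conv_lhs => enter [2, 2]; rw [A.comm₁ g a u]
  conv_lhs => enter [2]; rw [A.assoc g u a c t]
  conv_lhs => enter [3, 4]; rw [e3]
  conv_lhs => rw [A.comm₁ (A.m g (A.m u c t) (A.m a c t)) (A.m g u (A.m a c t)) (A.m h u t)]
  conv_lhs => rw [A.comm₂ (A.m g (A.m u c t) (A.m a c t)) (A.m h u t) (A.m g u (A.m a c t))]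
  conv_lhs => enter [3]; rw [A.comm₂ g u (A.m a c t)]
  conv_lhs => enter [3]; rw [A.comm₁ u (A.m a c t) g]
  conv_lhs => enter [4]; rw [A.comm₂ g (A.m u c t) (A.m a c t)]
  conv_lhs => enter [4]; rw [A.comm₁ (A.m u c t) (A.m a c t) g]
  conv_lhs => enter [4, 2]; rw [A.comm₂ u c t]
  conv_lhs => enter [4, 2]; rw [A.comm₁ c t u]
  conv_lhs => rw [← A.assoc (A.m h u t) u (A.m c u t) g (A.m a c t)]
  conv_lhs => enter [2]; rw [← A.comm₁ (A.m h u t) (A.m c u t) u]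
  conv_lhs => enter [2]; rw [← A.comm₂ u (A.m h u t) (A.m c u t)]
  conv_lhs => rw [← A.comm₁ (A.m u (A.m h u t) (A.m c u t)) (A.m a c t) g]
  conv_lhs => rw [← A.comm₂ g (A.m u (A.m h u t) (A.m c u t)) (A.m a c t)]
  conv_lhs => enter [3]; rw [← A.assoc u h c u t]
  conv_lhs => enter [3]; rw [← A.comm₁ (A.m u h c) t u]
  conv_lhs => enter [3]; rw [← A.comm₂ u (A.m u h c) t]
  conv_lhs => enter [3, 3]; rw [← e2]
  conv_lhs => rw [← A.assoc g u a c t]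
  conv_lhs => enter [2]; rw [← A.comm₁ g a u]
  conv_lhs => enter [2]; rw [← A.comm₂ u g a]
  conv_lhs => enter [2]; rw [← e1]
  conv_lhs => rw [← e3]

theorem aux_q2 (A : MedianAlgebra M) (u v p q b z : M)
    (h1 : b = A.m u p b) (h2 : b = A.m v q b) (h3 : z = A.m u v z) :
    A.m z (A.m b p q) b = b := by
  have hd1 : b = A.m u (A.m b q p) b := (A.aux_L1 u p b q h1).symm
  have hd2 : b = A.m v (A.m b p q) b := (A.aux_L1 v q b p h2).symm
  have stage1 : A.m z (A.m b p q) b = A.m u b (A.m z (A.m b p q) b) := by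
    conv_lhs => enter [2]; rw [h3]
    conv_lhs => rw [A.assoc u v z (A.m b p q) b]
    conv_lhs => enter [3]; rw [← hd2]
  rw [stage1]
  conv_lhs => rw [A.comm₂ u b (A.m z (A.m b p q) b)]
  conv_lhs => rw [A.comm₂ b (A.m z (A.m b p q) b) u]
  conv_lhs => enter [2]; rw [A.comm₂ z (A.m b p q) b]
  conv_lhs => enter [2]; rw [A.comm₂ (A.m b p q) b z]
  conv_lhs => rw [A.assoc b z (A.m b p q) u b]
  conv_lhs => enter [2]; rw [hd1]
  conv_lhs => rw [A.comm₂ (A.m u (A.m b q p) b) (A.m z u b) (A.m (A.m b p q) u b)]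
  conv_lhs => rw [A.comm₁ (A.m z u b) (A.m (A.m b p q) u b) (A.m u (A.m b q p) b)]
  conv_lhs => enter [3]; rw [A.comm₂ u (A.m b q p) b]
  conv_lhs => enter [3]; rw [A.comm₁ (A.m b q p) b u]
  conv_lhs => rw [← A.assoc (A.m z u b) (A.m b q p) (A.m b p q) u b]
  conv_lhs => enter [2, 4]; rw [A.comm₁ b p q]
  conv_lhs => enter [2]; rw [← A.assoc (A.m z u b) b b q p]
  conv_lhs => enter [2, 2]; rw [A.comm₂ (A.m z u b) b b]
  conv_lhs => enter [2, 2]; rw [A.idem b (A.m z u b)]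
  conv_lhs => rw [A.comm₂ (A.m b q p) u b]
  conv_lhs => rw [A.comm₁ u b (A.m b q p)]
  conv_lhs => rw [← hd1]

end MedianAlgebra

/-- Half-space separation: a maximal convex set containing `C` and avoiding `b` exists,
and every such maximal set is a half space. -/
theorem exists_maximal_convex_and_maximal_is_halfspace {M : Type*} (A : MedianAlgebra M)
    (C : Set M) (hC : A.Conv C) (b : M) (hb : b ∉ C) :
    (∃ H : Set M, A.Conv H ∧ C ⊆ H ∧ b ∉ H ∧
      ∀ H' : Set M, A.Conv H' → C ⊆ H' → b ∉ H' → H ⊆ H' → H = H') ∧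
    (∀ H : Set M, A.Conv H → C ⊆ H → b ∉ H →
      (∀ H' : Set M, A.Conv H' → C ⊆ H' → b ∉ H' → H ⊆ H' → H = H') →
      A.Conv Hᶜ) := by
  constructor
  · -- existence via Zorn
    set S : Set (Set M) := {H | A.Conv H ∧ C ⊆ H ∧ b ∉ H} with hSdef
    have hCS : C ∈ S := ⟨hC, subset_rfl, hb⟩
    have hchain : ∀ c ⊆ S, IsChain (· ⊆ ·) c → c.Nonempty →
        ∃ ub ∈ S, ∀ s ∈ c, s ⊆ ub := by
      intro c hcS hch hcne
      refine ⟨⋃₀ c, ⟨?_, ?_, ?_⟩, fun s hs => Set.subset_sUnion_of_mem hs⟩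
      · rintro x ⟨s, hs, hxs⟩ y ⟨t, ht, hyt⟩ w hw
        rcases eq_or_ne s t with rfl | hst
        · exact ⟨s, hs, (hcS hs).1 x hxs y hyt hw⟩
        · rcases hch hs ht hst with hsub | hsub
          · exact ⟨t, ht, (hcS ht).1 x (hsub hxs) y hyt hw⟩
          · exact ⟨s, hs, (hcS hs).1 x hxs y (hsub hyt) hw⟩
      · obtain ⟨s, hs⟩ := hcne
        exact ((hcS hs).2.1).trans (Set.subset_sUnion_of_mem hs)
      · rintro ⟨s, hs, hbs⟩
        exact (hcS hs).2.2 hbs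
    obtain ⟨H, hCH, hHmax⟩ := zorn_subset_nonempty S hchain C hCS
    refine ⟨H, hHmax.prop.1, hCH, hHmax.prop.2.2, ?_⟩
    intro H' h1 h2 h3 hsub
    exact Set.Subset.antisymm hsub (hHmax.2 ⟨h1, h2, h3⟩ hsub)
  · -- maximal implies half space
    intro H hConv hCH hbH hmax
    intro x hx y hy z hz
    have hxH : x ∉ H := hx
    have hyH : y ∉ H := hy
    intro hzH
    have hz' : z = A.m x y z := hz
    have key : ∀ u : M, u ∉ H → ∃ p ∈ H, b = A.m u p b := by
      intro u hu
      set J : Set M := {w | ∃ h ∈ H, w = A.m u h w} with hJdef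
      have hJconv : A.Conv J := by
        rintro w1 ⟨h1, hh1, e1⟩ w2 ⟨h2, hh2, e2⟩ w hw
        have hw' : w = A.m w1 w2 w := hw
        refine ⟨A.m h1 h2 w, ?_, (A.aux_q1 u h1 h2 w1 w2 w e1 e2 hw').symm⟩
        exact hConv h1 hh1 h2 hh2 (A.aux_absorb h1 h2 w).symm
      have hHJ : H ⊆ J := fun h hh => ⟨h, hh, (A.aux_right u h).symm⟩
      have hCJ : C ⊆ J := hCH.trans hHJ
      have huJ : u ∈ J := ⟨z, hzH, (A.aux_left u z).symm⟩
      by_contra hne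
      push_neg at hne
      have hbJ : b ∉ J := by
        rintro ⟨p, hp, hbp⟩
        exact hne p hp hbp
      have hHeq : H = J := hmax J hJconv hCJ hbJ hHJ
      exact hu (hHeq ▸ huJ)
    obtain ⟨p, hpH, hbp⟩ := key x hxH
    obtain ⟨q, hqH, hbq⟩ := key y hyH
    have hq2 : A.m z (A.m b p q) b = b := A.aux_q2 x y p q b z hbp hbq hz'
    have hrH : A.m b p q ∈ H := by
      rw [A.comm₂ b p q]
      exact hConv p hpH q hqH (A.aux_absorb p q b).symm
    exact hbH (hConv z hzH (A.m b p q) hrH hq2.symm)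
end

section
/- (Separation of disjoint convex sets) If A and B are disjoint convex subsets of a median algebra M, then there exists a half space H ⊆ M with A ⊆ H and B ∩ H = ∅. -/
namespace MedSep

variable {M : Type*} (A : MedianAlgebra M)

lemma m_12 (x y z : M) : A.m x y z = A.m y x z := by
  rw [A.comm₂, A.comm₁]

lemma m_rot (x y z : M) : A.m x y z = A.m y z x := A.comm₂ x y z

lemma m_aba (x y : M) : A.m x y x = x := by rw [A.comm₁]; exact A.idem x y

lemma m_abb (x y : M) : A.m x y y = y := by rw [A.comm₂]; exact A.idem y x

/-- Absorption with the first argument dropped. -/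
lemma absorb₁ (x y z : M) : A.m (A.m x y z) y z = A.m x y z := by
  rw [A.assoc, A.idem, m_aba]

/-- `m x y z ∈ I x y`. -/
lemma absorb (x y z : M) : A.m x y (A.m x y z) = A.m x y z := by
  have h : A.m x y z = A.m z x y := (m_rot A x y z).trans (m_rot A y z x)
  rw [h, m_rot A x y (A.m z x y), m_rot A y (A.m z x y) x, absorb₁]

/-- A distributivity law. -/
lemma mD (x a b c : M) : A.m x (A.m x a b) c = A.m x (A.m x a c) (A.m x b c) := by
  rw [m_rot A x (A.m x a b) c, A.assoc, ← m_rot A x a c, ← m_rot A x b c]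

/-- Key identity E. -/
lemma mE (x c₁ c₂ w : M) :
    A.m x (A.m c₁ c₂ w) w = A.m (A.m x c₁ w) (A.m x c₂ w) w := by
  have h1 : A.m (A.m x c₁ w) (A.m x c₂ w) w
      = A.m x (A.m c₁ (A.m x c₂ w) w) (A.m w (A.m x c₂ w) w) := A.assoc ..
  have h2 : A.m w (A.m x c₂ w) w = w := m_aba ..
  have h3 : A.m c₁ (A.m x c₂ w) w = A.m x (A.m c₁ c₂ w) w := by
    rw [m_rot A c₁ (A.m x c₂ w) w, A.assoc, A.idem, ← m_rot A c₁ c₂ w]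
  rw [h1, h2, h3, A.comm₁ x (A.m c₁ c₂ w) w, A.comm₁ x (A.m x w (A.m c₁ c₂ w)) w, absorb]

lemma mR1 (x a a' b w : M) (h1 : A.m x a' a = a) (h2 : A.m x w a' = a')
    (h3 : A.m a b w = w) : A.m a' b w = w := by
  have hu1 : A.m a' b w = A.m x w (A.m a' b w) := by
    conv_lhs => rw [← h2]
    rw [A.assoc, m_aba]
  have hu2 : w = A.m x (A.m a' b w) w := by
    conv_lhs => rw [← h3, ← h1]
    rw [A.assoc, h3]
  rw [hu1, A.comm₁ x w (A.m a' b w)]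
  exact hu2.symm

lemma monoB (x c d w : M) (h : A.m x c d = d) :
    A.m x (A.m x c w) (A.m x d w) = A.m x d w := by
  have e3 : A.m x d c = d := (A.comm₁ x d c).trans h
  have e5 : A.m x d (A.m x w c) = A.m x (A.m x w d) d := by
    rw [A.comm₁ x d (A.m x w c), mD A x w c d, h]
  have e6 : A.m x (A.m x w d) d = A.m x d w := by
    rw [A.comm₁ x (A.m x w d) d, A.comm₁ x w d, absorb]
  have h1 : A.m x c (A.m x d w) = A.m x d w := by
    rw [A.comm₁ x c (A.m x d w), mD A x d w c, e3, e5, e6]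
  have h3 : A.m x w (A.m x d w) = A.m x d w := by
    rw [A.comm₁ x d w, absorb]
  rw [mD A x c w (A.m x d w), h1, h3, m_abb]

/-- Convexity of the union of intervals from `x` to a convex set. -/
lemma hullLem (x c₁ c₂ d₁ d₂ w : M) (h1 : A.m x c₁ d₁ = d₁) (h2 : A.m x c₂ d₂ = d₂)
    (h3 : A.m d₁ d₂ w = w) : A.m x (A.m c₁ c₂ w) w = w := by
  have stepA : A.m (A.m x d₁ w) (A.m x d₂ w) w = w := by
    have hE := mE A x d₁ d₂ w
    rw [h3, m_abb] at hE
    exact hE.symm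
  have haa' : A.m x (A.m x c₁ w) (A.m x d₁ w) = A.m x d₁ w := monoB A x c₁ d₁ w h1
  have hbb' : A.m x (A.m x c₂ w) (A.m x d₂ w) = A.m x d₂ w := monoB A x c₂ d₂ w h2
  have ha'w : A.m x w (A.m x c₁ w) = A.m x c₁ w := by
    rw [A.comm₁ x c₁ w, absorb]
  have hb'w : A.m x w (A.m x c₂ w) = A.m x c₂ w := by
    rw [A.comm₁ x c₂ w, absorb]
  have r1 : A.m (A.m x c₁ w) (A.m x d₂ w) w = w :=
    mR1 A x (A.m x d₁ w) (A.m x c₁ w) (A.m x d₂ w) w haa' ha'w stepA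
  have r1' : A.m (A.m x d₂ w) (A.m x c₁ w) w = w := by
    rw [m_12]; exact r1
  have r2 : A.m (A.m x c₂ w) (A.m x c₁ w) w = w :=
    mR1 A x (A.m x d₂ w) (A.m x c₂ w) (A.m x c₁ w) w hbb' hb'w r1'
  have r2' : A.m (A.m x c₁ w) (A.m x c₂ w) w = w := by
    rw [m_12]; exact r2
  rw [mE]; exact r2'

lemma mS1 (x c c' t : M) (h : A.m x c t = t) : A.m x (A.m c c' t) t = t := by
  rw [mE, h]; exact m_aba A t (A.m x c' t)

lemma mS2 (x y z K t : M) (h1 : A.m x K t = t) (h2 : A.m y K t = t) :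
    A.m (A.m x y z) K t = t := by
  rw [A.assoc, h2]
  have e1 : A.m x t (A.m z K t) = A.m (A.m z K t) x t :=
    (m_rot A x t (A.m z K t)).trans (m_rot A t (A.m z K t) x)
  rw [e1, A.assoc, m_aba, m_12 A K x t, h1, m_abb]

end MedSep

open MedSep
theorem separation_of_disjoint_convex {M : Type*} (A : MedianAlgebra M) (S T : Set M)
    (hS : A.Conv S) (hT : A.Conv T) (hdisj : S ∩ T = ∅) :
    ∃ H : Set M, A.Halfspace H ∧ S ⊆ H ∧ T ∩ H = ∅ := by
  classical
  set 𝒮 : Set (Set M) := {C | A.Conv C ∧ S ⊆ C ∧ C ∩ T = ∅} with h𝒮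
  have hS𝒮 : S ∈ 𝒮 := ⟨hS, le_refl _, hdisj⟩
  have hchainU : ∀ c ⊆ 𝒮, IsChain (· ⊆ ·) c → c.Nonempty → ∃ ub ∈ 𝒮, ∀ s ∈ c, s ⊆ ub := by
    intro c hc hchain hne
    refine ⟨⋃₀ c, ⟨?_, ?_, ?_⟩, fun s hs => Set.subset_sUnion_of_mem hs⟩
    · intro x hx y hy z hz
      obtain ⟨Cx, hCx, hxCx⟩ := hx
      obtain ⟨Cy, hCy, hyCy⟩ := hy
      rcases hchain.total hCx hCy with h | h
      · exact Set.subset_sUnion_of_mem hCy ((hc hCy).1 x (h hxCx) y hyCy hz)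
      · exact Set.subset_sUnion_of_mem hCx ((hc hCx).1 x hxCx y (h hyCy) hz)
    · obtain ⟨C₀, hC₀⟩ := hne
      exact (hc hC₀).2.1.trans (Set.subset_sUnion_of_mem hC₀)
    · apply Set.eq_empty_iff_forall_notMem.mpr
      rintro z ⟨⟨Cz, hCz, hzCz⟩, hzT⟩
      exact Set.eq_empty_iff_forall_notMem.mp (hc hCz).2.2 z ⟨hzCz, hzT⟩
  obtain ⟨C, hSC, hCmax⟩ := zorn_subset_nonempty 𝒮 hchainU S hS𝒮
  obtain ⟨⟨hCconv, hSsubC, hCT⟩, hCub⟩ := hCmax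
  -- D p : the union of the intervals [p, c], for c ∈ C
  set D : M → Set M := fun p => {u | ∃ c ∈ C, u = A.m p c u} with hD
  have hDconv : ∀ p, A.Conv (D p) := by
    intro p d₁ hd₁ d₂ hd₂ u hu
    obtain ⟨c₁, hc₁, e₁⟩ := hd₁
    obtain ⟨c₂, hc₂, e₂⟩ := hd₂
    have hu' : u = A.m d₁ d₂ u := hu
    refine ⟨A.m c₁ c₂ u, hCconv c₁ hc₁ c₂ hc₂ (absorb A c₁ c₂ u).symm, ?_⟩
    exact (hullLem A p c₁ c₂ d₁ d₂ u e₁.symm e₂.symm hu'.symm).symm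
  have hCsubD : ∀ p, C ⊆ D p := fun p c hc => ⟨c, hc, (m_abb A p c).symm⟩
  -- the complement of C is convex
  have hCc : A.Conv Cᶜ := by
    intro a ha b hb w hw
    by_contra hwC
    rw [Set.mem_compl_iff, not_not] at hwC
    have hw' : w = A.m a b w := hw
    have hmeet : ∀ p : M, p ∉ C → ∃ t ∈ T, t ∈ D p := by
      intro p hp
      by_contra hno
      push_neg at hno
      have hDT : D p ∩ T = ∅ := by
        apply Set.eq_empty_iff_forall_notMem.mpr
        rintro z ⟨hz1, hz2⟩
        exact hno z hz2 hz1
      have hD𝒮 : D p ∈ 𝒮 := ⟨hDconv p, hSsubC.trans (hCsubD p), hDT⟩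
      have hpD : p ∈ D p := ⟨w, hwC, (m_aba A p w).symm⟩
      exact hp (hCub hD𝒮 (hCsubD p) hpD)
    obtain ⟨t₁, ht₁T, ht₁D⟩ := hmeet a ha
    obtain ⟨t₂, ht₂T, ht₂D⟩ := hmeet b hb
    -- t is in T
    have htT : A.m t₁ t₂ w ∈ T := hT t₁ ht₁T t₂ ht₂T (absorb A t₁ t₂ w).symm
    -- t ∈ D a
    have hwDa : w ∈ D a := hCsubD a hwC
    have hwDb : w ∈ D b := hCsubD b hwC
    have htI1 : A.m t₁ t₂ w = A.m t₁ w (A.m t₁ t₂ w) := by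
      rw [A.comm₁ t₁ t₂ w, absorb]
    have htI2 : A.m t₁ t₂ w = A.m t₂ w (A.m t₁ t₂ w) := by
      rw [m_rot A t₁ t₂ w]
      exact (absorb A t₂ w t₁).symm
    have htDa : A.m t₁ t₂ w ∈ D a := hDconv a t₁ ht₁D w hwDa htI1
    have htDb : A.m t₁ t₂ w ∈ D b := hDconv b t₂ ht₂D w hwDb htI2
    obtain ⟨c₃, hc₃, e₃⟩ := htDa
    obtain ⟨c₄, hc₄, e₄⟩ := htDb
    -- K ∈ C
    have hK : A.m c₃ c₄ (A.m t₁ t₂ w) ∈ C :=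
      hCconv c₃ hc₃ c₄ hc₄ (absorb A c₃ c₄ (A.m t₁ t₂ w)).symm
    have f1 : A.m a (A.m c₃ c₄ (A.m t₁ t₂ w)) (A.m t₁ t₂ w) = A.m t₁ t₂ w :=
      mS1 A a c₃ c₄ (A.m t₁ t₂ w) e₃.symm
    have f2 : A.m b (A.m c₃ c₄ (A.m t₁ t₂ w)) (A.m t₁ t₂ w) = A.m t₁ t₂ w := by
      rw [m_12 A c₃ c₄ (A.m t₁ t₂ w)]
      exact mS1 A b c₄ c₃ (A.m t₁ t₂ w) e₄.symm
    have f3 : A.m (A.m a b w) (A.m c₃ c₄ (A.m t₁ t₂ w)) (A.m t₁ t₂ w) = A.m t₁ t₂ w :=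
      mS2 A a b w (A.m c₃ c₄ (A.m t₁ t₂ w)) (A.m t₁ t₂ w) f1 f2
    rw [← hw'] at f3
    -- t ∈ C
    have htC : A.m t₁ t₂ w ∈ C := hCconv w hwC _ hK f3.symm
    exact Set.eq_empty_iff_forall_notMem.mp hCT (A.m t₁ t₂ w) ⟨htC, htT⟩
  exact ⟨C, ⟨hCconv, hCc⟩, hSsubC, by rw [Set.inter_comm]; exact hCT⟩
end

section
/- In a median algebra M with subset X, an element x ∈ X is closest to y (meaning x ∈ [y,z] for all z ∈ X) if and only if the separator Δ(x,y) equals the separator Δ(X,y). -/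
namespace MedianAlgebraAux

open MedianAlgebra

variable {M : Type*} (A : MedianAlgebra M)

/- permutation lemmas -/
lemma m213 (x y z : M) : A.m x y z = A.m y x z := by
  rw [A.comm₂ x y z, A.comm₁]

lemma m312 (x y z : M) : A.m x y z = A.m z x y := by
  rw [A.comm₂ x y z, A.comm₂]

lemma m321 (x y z : M) : A.m x y z = A.m z y x := by
  rw [m312 A x y z, A.comm₁]

lemma idem' (x y : M) : A.m x y x = x := by rw [A.comm₁]; exact A.idem x y

lemma idem'' (x y : M) : A.m x y y = y := by rw [A.comm₂]; exact A.idem y x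

lemma mem_I {x y z : M} : z ∈ A.I x y ↔ z = A.m x y z := Iff.rfl

lemma self_mem_left (x y : M) : x ∈ A.I x y := (idem' A x y).symm

lemma self_mem_right (x y : M) : y ∈ A.I x y := by
  show y = A.m x y y
  rw [A.comm₂]; exact (A.idem y x).symm

/-- `m x y z ∈ [x, y]` (absorption). -/
lemma absorb (x y z : M) : A.m x y z ∈ A.I x y := by
  show A.m x y z = A.m x y (A.m x y z)
  have h1 : A.m x y (A.m x y z) = A.m (A.m z x y) x y := by
    rw [m312 A x y (A.m x y z), m312 A x y z]
  rw [h1, A.assoc, A.idem, idem' A y x, ← m312 A x y z]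

/-- Intervals are convex. -/
lemma I_conv (x y : M) : A.Conv (A.I x y) := by
  intro u hu v hv t ht
  show t = A.m x y t
  have hu' : A.m u x y = u := by rw [A.comm₂]; exact hu.symm
  have hv' : A.m v x y = v := by rw [A.comm₂]; exact hv.symm
  have ht' : t = A.m t u v := ht.trans (m312 A u v t)
  have key : A.m (A.m t u v) x y = A.m t u v := by
    rw [A.assoc, hu', hv']
  calc t = A.m t u v := ht'
    _ = A.m (A.m t u v) x y := key.symm
    _ = A.m t x y := by rw [← ht']
    _ = A.m x y t := A.comm₂ t x y

/-- Lemma B: if `t ∈ [a,b]` and `a ∈ [u,c]` then `t ∈ [u, m c b t]`. -/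
lemma starB {t a b u c : M} (ht : t ∈ A.I a b) (ha : a ∈ A.I u c) :
    t ∈ A.I u (A.m c b t) := by
  have ht' : t = A.m a b t := ht
  have ha' : A.m u a c = a := (A.comm₁ u a c).trans ha.symm
  show t = A.m u (A.m c b t) t
  have key : A.m u (A.m c b t) (A.m a b t) = t := by
    calc A.m u (A.m c b t) (A.m a b t)
        = A.m u (A.m a b t) (A.m c b t) := A.comm₁ _ _ _
      _ = A.m (A.m u a c) b t := (A.assoc u a c b t).symm
      _ = A.m a b t := by rw [ha']
      _ = t := ht'.symm
  calc t = A.m u (A.m c b t) (A.m a b t) := key.symm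
    _ = A.m u (A.m c b t) t := by rw [← ht']

/-- Lemma C: if `t ∈ [u,d]` and `d ∈ [u,f]` then `t ∈ [u,f]`. -/
lemma starC {t u d f : M} (ht : t ∈ A.I u d) (hd : d ∈ A.I u f) :
    t ∈ A.I u f := by
  rw [mem_I] at ht hd ⊢
  have hd' : A.m d u f = d := (A.comm₂ d u f).trans hd.symm
  have ht'' : A.m t u d = t := (A.comm₂ t u d).trans ht.symm
  calc t = A.m t u d := ht''.symm
    _ = A.m t (A.m u u f) (A.m d u f) := by rw [A.idem, hd']
    _ = A.m (A.m t u d) u f := (A.assoc t u d u f).symm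
    _ = A.m t u f := by rw [ht'']
    _ = A.m u f t := A.comm₂ t u f

/-- The star of a convex set around a point is convex. -/
lemma star_conv {C : Set M} (hC : A.Conv C) (u : M) :
    A.Conv {z | ∃ c ∈ C, z ∈ A.I u c} := by
  rintro a ⟨c1, hc1, ha⟩ b ⟨c2, hc2, hb⟩ t ht
  -- t ∈ [a,b], a ∈ [u,c1]  ⇒  t ∈ [u, d],  d := m c1 b t
  have h1 : t ∈ A.I u (A.m c1 b t) := starB A ht ha
  set d := A.m c1 b t with hdd
  -- d ∈ [b, c1], b ∈ [u,c2]  ⇒  d ∈ [u, m c2 c1 d]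
  have hd_ab : d ∈ A.I b c1 := by
    have habs := absorb A c1 b t
    show d = A.m b c1 d
    rw [m213 A b c1 d, hdd]
    exact habs
  have h2 : d ∈ A.I u (A.m c2 c1 d) := starB A hd_ab hb
  have hf : A.m c2 c1 d ∈ C := hC c2 hc2 c1 hc1 (absorb A c2 c1 d)
  exact ⟨A.m c2 c1 d, hf, starC A h1 h2⟩

/-- Lemma for convexity of the complement of a maximal convex set. -/
lemma key5 {x u v w c1 c2 : M} (h1 : x ∈ A.I u c1) (h2 : x ∈ A.I v c2)
    (hw : w ∈ A.I u v) : x ∈ A.I w (A.m c1 c2 x) := by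
  rw [mem_I] at h1 h2 hw ⊢
  have h1' : A.m u c1 x = x := h1.symm
  have h2' : A.m v c2 x = x := h2.symm
  have hw' : w = A.m w u v := hw.trans (m312 A u v w)
  have e6 : A.m c1 (A.m c2 u x) x = x := by
    calc A.m c1 (A.m c2 u x) x = A.m (A.m c2 u x) c1 x := m213 A _ _ _
      _ = A.m c2 (A.m u c1 x) (A.m x c1 x) := A.assoc c2 u x c1 x
      _ = A.m c2 x x := by rw [h1', idem' A x c1]
      _ = x := idem'' A c2 x
  have e5 : A.m u (A.m c1 c2 x) x = x := by
    calc A.m u (A.m c1 c2 x) x = A.m (A.m c1 c2 x) u x := m213 A _ _ _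
      _ = A.m c1 (A.m c2 u x) (A.m x u x) := A.assoc c1 c2 x u x
      _ = A.m c1 (A.m c2 u x) x := by rw [idem' A x u]
      _ = x := e6
  have e4 : A.m (A.m u c2 x) c1 x = x := by
    calc A.m (A.m u c2 x) c1 x
        = A.m u (A.m c2 c1 x) (A.m x c1 x) := A.assoc u c2 x c1 x
      _ = A.m u (A.m c1 c2 x) x := by rw [m213 A c2 c1 x, idem' A x c1]
      _ = x := e5
  have e2 : A.m c2 w x = A.m w (A.m u c2 x) x := by
    calc A.m c2 w x = A.m w c2 x := m213 A _ _ _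
      _ = A.m (A.m w u v) c2 x := by rw [← hw']
      _ = A.m w (A.m u c2 x) (A.m v c2 x) := A.assoc w u v c2 x
      _ = A.m w (A.m u c2 x) x := by rw [h2']
  have e3 : A.m c1 (A.m w (A.m u c2 x) x) x = A.m w x x := by
    calc A.m c1 (A.m w (A.m u c2 x) x) x
        = A.m (A.m w (A.m u c2 x) x) c1 x := m213 A _ _ _
      _ = A.m w (A.m (A.m u c2 x) c1 x) (A.m x c1 x) := A.assoc w (A.m u c2 x) x c1 x
      _ = A.m w x x := by rw [e4, idem' A x c1]
  calc x = A.m w x x := (idem'' A w x).symm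
    _ = A.m c1 (A.m w (A.m u c2 x) x) x := e3.symm
    _ = A.m c1 (A.m c2 w x) x := by rw [← e2]
    _ = A.m (A.m c1 c2 x) w x := by
        rw [A.assoc c1 c2 x w x, idem' A x w]
    _ = A.m w (A.m c1 c2 x) x := m213 A _ _ _

/-- Kakutani separation: a point not in a convex set can be separated by a half space. -/
lemma separation {C : Set M} (hC : A.Conv C) (hCne : C.Nonempty) {x : M} (hx : x ∉ C) :
    ∃ H : Set M, A.Halfspace H ∧ x ∈ H ∧ C ⊆ Hᶜ := by
  -- Zorn: maximal convex set containing C and avoiding x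
  set S : Set (Set M) := {W | A.Conv W ∧ C ⊆ W ∧ x ∉ W} with hS
  have hzorn : ∀ c ⊆ S, IsChain (· ⊆ ·) c → c.Nonempty → ∃ ub ∈ S, ∀ s ∈ c, s ⊆ ub := by
    intro c hcS hchain ⟨W0, hW0⟩
    refine ⟨⋃₀ c, ⟨?_, ?_, ?_⟩, fun s hs => Set.subset_sUnion_of_mem hs⟩
    · rintro p ⟨W1, hW1, hp⟩ q ⟨W2, hW2, hq⟩ t ht
      rcases eq_or_ne W1 W2 with rfl | hne
      · exact ⟨W1, hW1, (hcS hW1).1 p hp q hq ht⟩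
      · rcases hchain hW1 hW2 hne with h | h
        · exact ⟨W2, hW2, (hcS hW2).1 p (h hp) q hq ht⟩
        · exact ⟨W1, hW1, (hcS hW1).1 p hp q (h hq) ht⟩
    · exact (hcS hW0).2.1.trans (Set.subset_sUnion_of_mem hW0)
    · rintro ⟨W1, hW1, hxW1⟩
      exact (hcS hW1).2.2 hxW1
  obtain ⟨W, hCW, hWmax⟩ := zorn_subset_nonempty S hzorn C ⟨hC, le_refl C, hx⟩
  have hWS : W ∈ S := hWmax.prop
  obtain ⟨hWconv, hCW', hxW⟩ := hWS
  -- for any u ∉ W, x lies in some [u, c] with c ∈ W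
  have hstar : ∀ u : M, u ∉ W → ∃ c ∈ W, x ∈ A.I u c := by
    intro u hu
    set J : Set M := {z | ∃ c ∈ W, z ∈ A.I u c} with hJ
    have hJconv : A.Conv J := star_conv A hWconv u
    have hWJ : W ⊆ J := fun c hc => ⟨c, hc, self_mem_right A u c⟩
    by_contra hxJ
    push_neg at hxJ
    have hxJ' : x ∉ J := by rintro ⟨c, hc, hxc⟩; exact hxJ c hc hxc
    have hJS : J ∈ S := ⟨hJconv, hCW'.trans hWJ, hxJ'⟩
    have : J ⊆ W := hWmax.2 hJS hWJ
    obtain ⟨c0, hc0⟩ := hCne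
    exact hu (this ⟨c0, hCW' hc0, self_mem_left A u c0⟩)
  -- complement of W is convex
  have hWc : A.Conv Wᶜ := by
    intro u hu v hv t ht
    intro htW
    obtain ⟨c1, hc1, h1⟩ := hstar u hu
    obtain ⟨c2, hc2, h2⟩ := hstar v hv
    have hkey := key5 A h1 h2 ht
    have hp : A.m c1 c2 x ∈ W := hWconv c1 hc1 c2 hc2 (absorb A c1 c2 x)
    exact hxW (hWconv t htW _ hp hkey)
  exact ⟨Wᶜ, ⟨hWc, by rw [compl_compl]; exact hWconv⟩, hxW, fun c hc hcc => hcc (hCW' hc)⟩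

end MedianAlgebraAux

open MedianAlgebraAux in
theorem closest_iff_sep_eq {M : Type*} (A : MedianAlgebra M) (X : Set M) (x : M)
    (hx : x ∈ X) (y : M) :
    (∀ z ∈ X, x ∈ A.I y z) ↔ A.sep {x} {y} = A.sep X {y} := by
  constructor
  · intro hclose
    apply Set.Subset.antisymm
    · rintro H ⟨hH, hxH, hyH⟩
      refine ⟨hH, fun z hz => ?_, hyH⟩
      by_contra hzH
      have hy' : y ∈ Hᶜ := hyH rfl
      have : x ∈ Hᶜ := hH.2 y hy' z hzH (hclose z hz)
      exact this (hxH rfl)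
    · rintro H ⟨hH, hXH, hyH⟩
      exact ⟨hH, fun w hw => by rw [Set.mem_singleton_iff] at hw; exact hw ▸ hXH hx, hyH⟩
  · intro hsep z hz
    by_contra hxI
    obtain ⟨H, hH, hxH, hIH⟩ :=
      separation A (I_conv A y z) ⟨y, self_mem_left A y z⟩ hxI
    have hmem : H ∈ A.sep {x} {y} := by
      refine ⟨hH, fun w hw => by rw [Set.mem_singleton_iff] at hw; exact hw ▸ hxH,
        fun w hw => by rw [Set.mem_singleton_iff] at hw; exact hw ▸ hIH (self_mem_left A y z)⟩
    rw [hsep] at hmem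
    exact hIH (self_mem_right A y z) (hmem.2.1 hz)
end

section
/- (Triangle equality) In a median algebra M, for all x,y,z the symmetric difference of the sets of hyper planes separating x from y and separating y from z equals the set of hyper planes separating x from z. Moreover, y ∈ [x,z] if and only if this symmetric difference is a disjoint union, i.e., Δ̄(x,y) ∩ Δ̄(y,z) = ∅. -/
/-- The set of hyper planes (unordered pairs `{H, Hᶜ}`) separating `x` and `y`. -/
def MedianAlgebra.hsep {M : Type*} (A : MedianAlgebra M) (x y : M) : Set (Set (Set M)) :=
  {p | ∃ H : Set M, A.Halfspace H ∧ x ∈ H ∧ y ∉ H ∧ p = {H, Hᶜ}}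


namespace MedianAlgebra

variable {M : Type*} (A : MedianAlgebra M)

lemma rot (x y z : M) : A.m x y z = A.m y z x := A.comm₂ x y z
lemma sw23 (x y z : M) : A.m x y z = A.m x z y := A.comm₁ x y z
lemma sw12 (x y z : M) : A.m x y z = A.m y x z := by rw [A.comm₂, A.comm₁]
lemma sw13 (x y z : M) : A.m x y z = A.m z y x := by rw [A.comm₂, A.comm₂, A.comm₁]

lemma idem2 (x y : M) : A.m x y x = x := by rw [A.comm₁]; exact A.idem x y
lemma idem3 (x y : M) : A.m x y y = y := by rw [A.comm₂]; exact A.idem y x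

lemma bh (x u y v : M) : A.m (A.m x u y) u v = A.m x u (A.m y u v) := by
  rw [A.assoc, A.idem]

lemma abs (x y z : M) : A.m (A.m x y z) y z = A.m x y z := by
  rw [A.assoc, A.idem, A.idem2]

lemma abs2 (x y z : M) : A.m x y (A.m x y z) = A.m x y z := by
  calc A.m x y (A.m x y z) = A.m (A.m x y z) x y := (A.rot (A.m x y z) x y).symm
    _ = A.m (A.m z x y) x y := by rw [← A.rot z x y]
    _ = A.m z x y := A.abs z x y
    _ = A.m x y z := A.rot z x y

lemma between_trans {k y p c : M} (hk : k = A.m y p k) (hy : y = A.m p c y) :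
    y = A.m k c y := by
  have h : A.m k c y = A.m y (A.m p c y) (A.m k c y) := by
    conv_lhs => rw [hk]
    exact A.assoc y p k c y
  rw [← hy, A.idem] at h
  exact h.symm

lemma proj_eq {x y p : M} (hp : p = A.m x y p) (a b : M) :
    A.m (A.m a x y) (A.m b x y) p = A.m (A.m a x y) b p := by
  have e1 : A.m x (A.m b x y) p = A.m x b p := by
    rw [A.sw12 x (A.m b x y) p, A.bh, A.sw12 y x p, ← hp, A.sw12 b x p]
  have e2 : A.m y (A.m b x y) p = A.m y b p := by
    rw [A.sw12 y (A.m b x y) p, A.sw23 b x y, A.bh, ← hp, A.sw12 b y p]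
  calc A.m (A.m a x y) (A.m b x y) p
      = A.m a (A.m x (A.m b x y) p) (A.m y (A.m b x y) p) := A.assoc a x y _ p
    _ = A.m a (A.m x b p) (A.m y b p) := by rw [e1, e2]
    _ = A.m (A.m a x y) b p := (A.assoc a x y b p).symm

lemma m_proj (x y a b c : M) :
    A.m x y (A.m a b c) = A.m (A.m x y a) (A.m x y b) (A.m x y c) := by
  have hp : A.m c x y = A.m x y (A.m c x y) := by
    rw [A.rot c x y]
    exact (A.abs2 x y c).symm
  have key : A.m (A.m a x y) (A.m b x y) (A.m c x y) = A.m a (A.m b x y) (A.m c x y) := by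
    calc A.m (A.m a x y) (A.m b x y) (A.m c x y)
        = A.m (A.m b x y) (A.m a x y) (A.m c x y) := by rw [A.sw12 (A.m a x y)]
      _ = A.m (A.m b x y) a (A.m c x y) := A.proj_eq hp b a
      _ = A.m a (A.m b x y) (A.m c x y) := by rw [A.sw12]
  calc A.m x y (A.m a b c)
      = A.m (A.m a b c) x y := (A.rot (A.m a b c) x y).symm
    _ = A.m a (A.m b x y) (A.m c x y) := A.assoc a b c x y
    _ = A.m (A.m a x y) (A.m b x y) (A.m c x y) := key.symm
    _ = A.m (A.m x y a) (A.m x y b) (A.m x y c) := by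
        rw [A.rot a x y, A.rot b x y, A.rot c x y]

lemma m_between {a c u : M} (hu : u = A.m a c u) (w : M) :
    A.m a c w = A.m w u (A.m a c w) := by
  have h2 : A.m c w u = A.m (A.m a c w) c u := by
    conv_lhs => rw [hu]
    rw [A.sw12 c w, ← A.bh w c a u, A.sw13 w c a]
  have h3 : A.m a w (A.m a c w) = A.m a c w := by
    conv_lhs => rw [A.sw23 a c w]
    rw [A.abs2 a w c, A.sw23 a w c]
  have main : A.m w u (A.m a c w) = A.m a c w := by
    calc A.m w u (A.m a c w)
        = A.m (A.m a c w) w u := by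
          rw [A.rot w u (A.m a c w), A.rot u (A.m a c w) w]
      _ = A.m (A.m a w c) w u := by rw [A.sw23 a c w]
      _ = A.m a w (A.m c w u) := A.bh a w c u
      _ = A.m a w (A.m (A.m a c w) c u) := by rw [h2]
      _ = A.m (A.m a w (A.m a c w)) (A.m a w c) (A.m a w u) := A.m_proj a w _ c u
      _ = A.m (A.m a c w) (A.m a c w) (A.m a w u) := by rw [h3, A.sw23 a w c]
      _ = A.m a c w := A.idem _ _
  exact main.symm

lemma gate {a c c' u v w : M} (hu : u = A.m a c u) (hv : v = A.m a c' v)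
    (hw : w = A.m u v w) : w = A.m a (A.m c c' w) w := by
  have hm1 : A.m a c w = A.m w u (A.m a c w) := A.m_between hu w
  have hm2 : A.m a c' w = A.m w v (A.m a c' w) := A.m_between hv w
  have s1 : w = A.m (A.m a c w) v w := A.between_trans hm1 hw
  have s1' : w = A.m v (A.m a c w) w := by
    rw [A.sw12 v (A.m a c w) w]; exact s1
  have s2 : w = A.m (A.m a c' w) (A.m a c w) w := A.between_trans hm2 s1'
  have expand : A.m a (A.m c c' w) w = A.m (A.m a c w) (A.m a c' w) w := by
    rw [A.sw23 a (A.m c c' w) w, A.m_proj a w c c' w, A.idem3 a w,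
      A.sw23 a w c, A.sw23 a w c']
  rw [expand, A.sw12 (A.m a c w)]
  exact s2

lemma quad {u v w c₁ c₂ y : M} (h1 : y = A.m u c₁ y) (h2 : y = A.m v c₂ y)
    (h3 : w = A.m u v w) : y = A.m w (A.m c₁ c₂ y) y := by
  have ha : A.m y w c₁ = A.m y (A.m y c₁ v) (A.m y w c₁) := by
    conv_lhs => rw [A.sw23 y w c₁, h3]
    rw [A.m_proj y c₁ u v w, A.sw13 y c₁ u, ← h1, A.sw23 y c₁ w]
  have hb : A.m y c₁ v = A.m y v (A.m y c₁ v) := by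
    conv_rhs => rw [A.sw23 y c₁ v]
    rw [A.abs2 y v c₁, A.sw23 y v c₁]
  have hc : y = A.m (A.m y c₁ v) c₂ y := A.between_trans hb h2
  have hd : y = A.m (A.m y w c₁) c₂ y := A.between_trans ha hc
  have he : A.m (A.m c₁ y w) (A.m c₂ y w) y = A.m (A.m c₁ y w) c₂ y :=
    A.proj_eq (A.idem2 y w).symm c₁ c₂
  have hf : A.m w (A.m c₁ c₂ y) y = y := by
    rw [A.rot w (A.m c₁ c₂ y) y, A.rot (A.m c₁ c₂ y) y w,
      A.m_proj y w c₁ c₂ y, A.idem2 y w, ← A.rot c₁ y w, ← A.rot c₂ y w, he,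
      A.rot c₁ y w]
    exact hd.symm
  exact hf.symm


lemma left_mem_I (x y : M) : x ∈ A.I x y := (A.idem2 x y).symm
lemma right_mem_I (x y : M) : y ∈ A.I x y := (A.idem3 x y).symm

lemma I_conv (x y : M) : A.Conv (A.I x y) := by
  intro u hu v hv w hw
  have hu : u = A.m x y u := hu
  have hv : v = A.m x y v := hv
  have hw : w = A.m u v w := hw
  have h1 : A.m w u v = w := by rw [A.rot w u v]; exact hw.symm
  have h2 : A.m (A.m w u v) x y = A.m w u v := by
    rw [A.assoc w u v x y, A.rot u x y, ← hu, A.rot v x y, ← hv]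
  rw [h1] at h2
  show w = A.m x y w
  calc w = A.m w x y := h2.symm
    _ = A.m x y w := A.rot w x y

lemma conv_sUnion_chain {c : Set (Set M)} (hc : IsChain (· ⊆ ·) c)
    (h : ∀ C ∈ c, A.Conv C) : A.Conv (⋃₀ c) := by
  rintro a ⟨Ca, hCa, haC⟩ b ⟨Cb, hCb, hbC⟩ t ht
  rcases hc.total hCa hCb with hab | hba
  · exact ⟨Cb, hCb, h Cb hCb a (hab haC) b hbC ht⟩
  · exact ⟨Ca, hCa, h Ca hCa a haC b (hba hbC) ht⟩

/-- Separation: a convex set can be separated from an outside point by a half space. -/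
theorem separation {D : Set M} (hD : A.Conv D) (hne : D.Nonempty) {y : M} (hy : y ∉ D) :
    ∃ H : Set M, A.Halfspace H ∧ D ⊆ H ∧ y ∉ H := by
  set S : Set (Set M) := {C | A.Conv C ∧ D ⊆ C ∧ y ∉ C} with hS
  obtain ⟨C, hDC0, hCmax⟩ : ∃ C, D ⊆ C ∧ Maximal (· ∈ S) C := by
    apply zorn_subset_nonempty S ?_ D ⟨hD, subset_rfl, hy⟩
    intro c hcS hchain hcne
    refine ⟨⋃₀ c, ⟨A.conv_sUnion_chain hchain (fun C hC => (hcS hC).1), ?_, ?_⟩,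
      fun s hs => Set.subset_sUnion_of_mem hs⟩
    · obtain ⟨C0, hC0⟩ := hcne
      exact (hcS hC0).2.1.trans (Set.subset_sUnion_of_mem hC0)
    · rintro ⟨C0, hC0, hyC0⟩
      exact (hcS hC0).2.2 hyC0
  obtain ⟨⟨hCconv, hDC, hyC⟩, hmax⟩ := hCmax
  obtain ⟨d, hd⟩ := hne
  have hdC : d ∈ C := hDC hd
  have gateJ : ∀ t : M, t ∉ C → ∃ c ∈ C, y ∈ A.I t c := by
    intro t htC
    by_contra hcon
    push_neg at hcon
    have hJconv : A.Conv {p | ∃ c ∈ C, p ∈ A.I t c} := by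
      rintro p ⟨c1, hc1, hp⟩ q ⟨c2, hc2, hq⟩ r hr
      refine ⟨A.m c1 c2 r, hCconv c1 hc1 c2 hc2 ?_, ?_⟩
      · exact (A.abs2 c1 c2 r).symm
      · exact A.gate hp hq hr
    have hCJ : C ⊆ {p | ∃ c ∈ C, p ∈ A.I t c} :=
      fun c hc => ⟨c, hc, (A.idem3 t c).symm⟩
    have hJS : {p | ∃ c ∈ C, p ∈ A.I t c} ∈ S := by
      refine ⟨hJconv, hDC.trans hCJ, ?_⟩
      rintro ⟨c, hc, hyc⟩
      exact hcon c hc hyc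
    have hsub : {p | ∃ c ∈ C, p ∈ A.I t c} ⊆ C := hmax hJS hCJ
    exact htC (hsub ⟨d, hdC, (A.idem2 t d).symm⟩)
  refine ⟨C, ⟨hCconv, ?_⟩, hDC, hyC⟩
  intro u hu v hv w hw
  intro hwC
  obtain ⟨c1, hc1, hyu⟩ := gateJ u hu
  obtain ⟨c2, hc2, hyv⟩ := gateJ v hv
  have hq : y = A.m w (A.m c1 c2 y) y := A.quad hyu hyv hw
  have hsC : A.m c1 c2 y ∈ C := hCconv c1 hc1 c2 hc2 (A.abs2 c1 c2 y).symm
  exact hyC (hCconv w hwC (A.m c1 c2 y) hsC hq)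

lemma halfspace_compl {H : Set M} (hH : A.Halfspace H) : A.Halfspace Hᶜ :=
  ⟨hH.2, by rw [compl_compl]; exact hH.1⟩

lemma pair_compl (H : Set M) : ({Hᶜ, Hᶜᶜ} : Set (Set M)) = {H, Hᶜ} := by
  rw [compl_compl, Set.pair_comm]

end MedianAlgebra

lemma hsep_pair_cases {M : Type*} {H K : Set M}
    (h : ({H, Hᶜ} : Set (Set M)) = {K, Kᶜ}) : K = H ∨ K = Hᶜ := by
  have : K ∈ ({H, Hᶜ} : Set (Set M)) := by
    rw [h]; exact Set.mem_insert _ _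
  rcases this with h1 | h2
  · exact Or.inl h1
  · exact Or.inr h2

/-- Triangle equality for hyper planes, and characterization of betweenness. -/
theorem triangle_equality {M : Type*} (A : MedianAlgebra M) (x y z : M) :
    symmDiff (A.hsep x y) (A.hsep y z) = A.hsep x z ∧
    (y ∈ A.I x z ↔ A.hsep x y ∩ A.hsep y z = ∅) := by
  constructor
  · ext p
    rw [Set.mem_symmDiff]
    constructor
    · rintro (⟨⟨H, hH, hxH, hyH, rfl⟩, hnot⟩ | ⟨⟨H, hH, hyH, hzH, rfl⟩, hnot⟩)
      · by_cases hz : z ∈ H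
        · exact absurd ⟨Hᶜ, A.halfspace_compl hH, hyH, fun h => h hz,
            (MedianAlgebra.pair_compl H).symm⟩ hnot
        · exact ⟨H, hH, hxH, hz, rfl⟩
      · by_cases hx : x ∈ H
        · exact ⟨H, hH, hx, hzH, rfl⟩
        · exact absurd ⟨Hᶜ, A.halfspace_compl hH, hx, fun h => h hyH,
            (MedianAlgebra.pair_compl H).symm⟩ hnot
    · rintro ⟨H, hH, hxH, hzH, rfl⟩
      by_cases hy : y ∈ H
      · refine Or.inr ⟨⟨H, hH, hy, hzH, rfl⟩, ?_⟩
        rintro ⟨K, hK, hxK, hyK, hpK⟩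
        rcases hsep_pair_cases hpK with rfl | rfl
        · exact hyK hy
        · exact hxK hxH
      · refine Or.inl ⟨⟨H, hH, hxH, hy, rfl⟩, ?_⟩
        rintro ⟨K, hK, hyK, hzK, hpK⟩
        rcases hsep_pair_cases hpK with rfl | rfl
        · exact hy hyK
        · exact hzK hzH
  · constructor
    · intro hyI
      apply Set.eq_empty_iff_forall_notMem.mpr
      rintro p ⟨⟨H, hH, hxH, hyH, rfl⟩, ⟨K, hK, hyK, hzK, hpK⟩⟩
      rcases hsep_pair_cases hpK with rfl | rfl
      · exact hyH hyK
      · have hzH : z ∈ H := not_not.mp hzK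
        exact hyH (hH.1 x hxH z hzH hyI)
    · intro hempty
      by_contra hyI
      obtain ⟨H, hH, hIH, hyH⟩ :=
        A.separation (A.I_conv x z) ⟨x, A.left_mem_I x z⟩ hyI
      have hp : ({H, Hᶜ} : Set (Set M)) ∈ A.hsep x y ∩ A.hsep y z := by
        constructor
        · exact ⟨H, hH, hIH (A.left_mem_I x z), hyH, rfl⟩
        · exact ⟨Hᶜ, A.halfspace_compl hH, hyH,
            fun h => h (hIH (A.right_mem_I x z)), (MedianAlgebra.pair_compl H).symm⟩
      rw [hempty] at hp
      exact hp
end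

section
/- (Extension Algorithm) Let P be a poc set, B ⊆ P a filter base and a ∈ P with a, a* ∉ B. Then B ∪ {a} or B ∪ {a*} is a filter base; in particular every filter base extends to an ultra filter (by Zorn's lemma). -/
/-- A poc set: a partially ordered set with least element `0` and an
order-reversing involution `*` such that `a ≤ a* → a = 0`. -/
structure PocSet (P : Type*) where
  le : P → P → Prop
  le_refl : ∀ a, le a a
  le_trans : ∀ {a b c}, le a b → le b c → le a c
  le_antisymm : ∀ {a b}, le a b → le b a → a = b
  zero : P
  star : P → P
  star_star : ∀ a, star (star a) = a
  star_anti : ∀ {a b}, le a b → le (star b) (star a)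
  zero_le : ∀ a, le (zero) a
  eq_zero : ∀ a, le a (star a) → a = zero

namespace PocSet

variable {P : Type*}

/-- A filter base: a subset `B` with `a ≰ b*` for all `a, b ∈ B`. -/
def FilterBase (S : PocSet P) (B : Set P) : Prop :=
  ∀ a ∈ B, ∀ b ∈ B, ¬ S.le a (S.star b)

/-- An ultra filter: an upper set containing exactly one of `a, a*` for every `a`. -/
def Ultra (S : PocSet P) (U : Set P) : Prop :=
  (∀ a ∈ U, ∀ b, S.le a b → b ∈ U) ∧ ∀ a, Xor' (a ∈ U) (S.star a ∈ U)

/-- Two elements are nested if `a` is comparable to `b` or to `b*`. -/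
def Nested (S : PocSet P) (a b : P) : Prop :=
  S.le a b ∨ S.le b a ∨ S.le a (S.star b) ∨ S.le (S.star b) a

/-- Two elements are transverse if they are not nested. -/
def Transverse (S : PocSet P) (a b : P) : Prop := ¬ S.Nested a b

/-- A proper element: neither `0` nor `0*`. -/
def Proper (S : PocSet P) (a : P) : Prop := a ≠ S.zero ∧ a ≠ S.star S.zero

end PocSet

namespace PocSet

variable {S : PocSet P}

/-- From a violation of the filter-base property of `B ∪ {a}`, extract useful info. -/
lemma viol (hB : S.FilterBase B) (h : ¬ S.FilterBase (B ∪ {a})) :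
    S.le a (S.star a) ∨ ∃ b ∈ B, S.le a (S.star b) := by
  unfold FilterBase at h
  push_neg at h
  obtain ⟨x, hx, y, hy, hxy⟩ := h
  rcases hx with hx | hx <;> rcases hy with hy | hy
  · exact absurd hxy (hB x hx y hy)
  · cases hy
    right
    refine ⟨x, hx, ?_⟩
    have := S.star_anti hxy
    rwa [S.star_star] at this
  · cases hx; exact Or.inr ⟨y, hy, hxy⟩
  · cases hx; cases hy; exact Or.inl hxy

lemma ext_step (hnt : S.star S.zero ≠ S.zero) (hB : S.FilterBase B) (a : P) :
    S.FilterBase (B ∪ {a}) ∨ S.FilterBase (B ∪ {S.star a}) := by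
  by_contra h
  push_neg at h
  obtain ⟨h1, h2⟩ := h
  have hb0 : ∀ b ∈ B, ¬ S.le b S.zero := by
    intro b hb hle
    have : b = S.zero := S.le_antisymm hle (S.zero_le b)
    subst this
    exact hB _ hb _ hb (S.zero_le _)
  rcases viol hB h1 with h1' | ⟨b, hb, hab⟩
  · -- a ≤ a*, so a = 0
    have ha0 : a = S.zero := S.eq_zero a h1'
    subst ha0
    rcases viol hB h2 with h2' | ⟨c, hc, hcc⟩
    · exact hnt (S.eq_zero _ h2')
    · have := S.star_anti hcc
      rw [S.star_star, S.star_star] at this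
      exact hb0 c hc this
  · rcases viol hB h2 with h2' | ⟨c, hc, hcc⟩
    · -- a* ≤ a*, so a* = 0, a = 0*
      have : S.star a = S.zero := S.eq_zero _ h2' 
      have ha : a = S.star S.zero := by rw [← this, S.star_star]
      subst ha
      have := S.star_anti hab
      rw [S.star_star, S.star_star] at this
      exact hb0 b hb this
    · -- c ≤ a (from c* ≥ a*) and a ≤ b* : contradiction with hB c b
      have := S.star_anti hcc
      rw [S.star_star, S.star_star] at this
      exact hB c hc b hb (S.le_trans this hab)

end PocSet

/-- The Extension Algorithm: a filter base avoiding `a` and `a*` can be extended by one of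
them, and every filter base extends to an ultra filter (the poc set being non trivial). -/
theorem extension_algorithm {P : Type*} (S : PocSet P)
    (hnt : S.star S.zero ≠ S.zero) :
    (∀ B : Set P, S.FilterBase B → ∀ a : P, a ∉ B → S.star a ∉ B →
      S.FilterBase (B ∪ {a}) ∨ S.FilterBase (B ∪ {S.star a})) ∧
    (∀ B : Set P, S.FilterBase B → ∃ U : Set P, S.Ultra U ∧ B ⊆ U) := by
  constructor
  · intro B hB a _ _
    exact PocSet.ext_step hnt hB a
  · intro B hB
    obtain ⟨M, hBM, hMmem, hMmax⟩ :=
      zorn_subset_nonempty {C : Set P | S.FilterBase C ∧ B ⊆ C}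
        (fun c hc hchain hne => by
          refine ⟨⋃₀ c, ⟨?_, ?_⟩, fun s hs => Set.subset_sUnion_of_mem hs⟩
          · rintro x ⟨s, hs, hx⟩ y ⟨t, ht, hy⟩
            rcases hchain.total hs ht with hst | hts
            · exact (hc ht).1 x (hst hx) y hy
            · exact (hc hs).1 x hx y (hts hy)
          · obtain ⟨s, hs⟩ := hne
            exact (hc hs).2.trans (Set.subset_sUnion_of_mem hs))
        B ⟨hB, le_refl B⟩
    obtain ⟨hMfb, -⟩ := hMmem
    have hmax : ∀ C : Set P, S.FilterBase C → M ⊆ C → C = M := by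
      intro C hC hMC
      exact Set.Subset.antisymm (hMmax ⟨hC, hBM.trans hMC⟩ hMC) hMC
    refine ⟨M, ⟨?_, ?_⟩, hBM⟩
    · -- upper set
      intro x hx y hxy
      have : S.FilterBase (M ∪ {y}) := by
        rintro u (hu | hu) v (hv | hv)
        · exact hMfb u hu v hv
        · cases hv
          intro h
          have hy' := S.star_anti hxy
          exact hMfb u hu x hx (S.le_trans h hy')
        · cases hu
          intro h
          exact hMfb x hx v hv (S.le_trans hxy h)
        · cases hu; cases hv
          intro h
          have hy0 : y = S.zero := S.eq_zero y h
          rw [hy0] at hxy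
          have hx0 : x = S.zero := S.le_antisymm hxy (S.zero_le x)
          refine hMfb x hx x hx ?_
          rw [hx0]
          exact S.zero_le _
      have := hmax _ this (Set.subset_union_left)
      rw [← this]
      exact Or.inr rfl
    · intro a
      have hnot : ¬ (a ∈ M ∧ S.star a ∈ M) := by
        rintro ⟨h1, h2⟩
        exact hMfb a h1 (S.star a) h2 (by rw [S.star_star]; exact S.le_refl a)
      have hor : a ∈ M ∨ S.star a ∈ M := by
        by_contra h
        push_neg at h
        rcases PocSet.ext_step hnt hMfb a with hfb | hfb
        · have := hmax _ hfb Set.subset_union_left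
          exact h.1 (this ▸ Set.mem_union_right M rfl)
        · have := hmax _ hfb Set.subset_union_left
          exact h.2 (this ▸ Set.mem_union_right M rfl)
      rcases hor with h | h
      · exact Or.inl ⟨h, fun h' => hnot ⟨h, h'⟩⟩
      · exact Or.inr ⟨h, fun h' => hnot ⟨h', h⟩⟩
end

section
/- Every simple graph Γ (no loops, no multiple edges) arises as the transversality graph of some poc set P: there is a poc set whose proper elements modulo * are in bijection with the vertices of Γ, with two elements transverse exactly when the corresponding vertices are adjacent. -/
/-- Every simple graph is the transversality graph of some poc set. -/
theorem exists_pocSet_transversality_graph {V : Type u} (G : SimpleGraph V) :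
    ∃ (P : Type u) (S : PocSet P) (f : V → P),
      (∀ v, S.Proper (f v)) ∧
      (∀ v w, f v = f w → v = w) ∧
      (∀ v w, f v ≠ S.star (f w)) ∧
      (∀ a : P, S.Proper a → ∃ v, a = f v ∨ a = S.star (f v)) ∧
      (∀ v w, v ≠ w → (S.Transverse (f v) (f w) ↔ G.Adj v w)) := by
  classical
  set X := Option (V ⊕ G.edgeSet) with hX
  set Av : V → Set X := fun v =>
    {x | x = some (Sum.inl v) ∨ ∃ e : G.edgeSet, x = some (Sum.inr e) ∧ v ∈ (e : Sym2 V)}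
    with hAv
  -- basic membership facts
  have hnone : ∀ v, (none : X) ∉ Av v := by
    intro v h
    rcases h with h | ⟨e, h, _⟩ <;> cases h
  have hinl : ∀ v w, (some (Sum.inl v) : X) ∈ Av w ↔ v = w := by
    intro v w
    constructor
    · rintro (h | ⟨e, h, _⟩)
      · exact Sum.inl.inj (Option.some.inj h)
      · exact absurd (Option.some.inj h) (by simp)
    · rintro rfl; exact Or.inl rfl
  have hinr : ∀ (e : G.edgeSet) v, (some (Sum.inr e) : X) ∈ Av v ↔ v ∈ (e : Sym2 V) := by
    intro e v
    constructor
    · rintro (h | ⟨e', h, he'⟩)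
      · exact absurd (Option.some.inj h) (by simp)
      · obtain rfl : e = e' := Sum.inr.inj (Option.some.inj h)
        exact he'
    · intro h; exact Or.inr ⟨e, rfl, h⟩
  set Pr : Set X → Prop := fun A => A = ∅ ∨ A = Set.univ ∨ ∃ v, A = Av v ∨ A = (Av v)ᶜ
    with hPr
  have hPrCompl : ∀ A, Pr A → Pr Aᶜ := by
    rintro A (rfl | rfl | ⟨v, rfl | rfl⟩)
    · exact Or.inr (Or.inl (by simp))
    · exact Or.inl (by simp)
    · exact Or.inr (Or.inr ⟨v, Or.inr rfl⟩)
    · exact Or.inr (Or.inr ⟨v, Or.inl (compl_compl _)⟩)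
  set S : PocSet {A : Set X // Pr A} :=
    { le := fun a b => (a : Set X) ⊆ (b : Set X)
      le_refl := fun a => subset_rfl
      le_trans := fun h1 h2 => h1.trans h2
      le_antisymm := fun h1 h2 => Subtype.ext (h1.antisymm h2)
      zero := ⟨∅, Or.inl rfl⟩
      star := fun a => ⟨(a : Set X)ᶜ, hPrCompl _ a.2⟩
      star_star := fun a => Subtype.ext (compl_compl _)
      star_anti := fun h => Set.compl_subset_compl.mpr h
      zero_le := fun a => Set.empty_subset _
      eq_zero := fun a h => Subtype.ext (by
        apply Set.eq_empty_iff_forall_notMem.mpr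
        intro x hx; exact h hx hx) } with hS
  set f : V → {A : Set X // Pr A} := fun v => ⟨Av v, Or.inr (Or.inr ⟨v, Or.inl rfl⟩)⟩ with hf
  refine ⟨{A : Set X // Pr A}, S, f, ?_, ?_, ?_, ?_, ?_⟩
  · -- proper
    intro v
    constructor
    · intro h
      have h' : Av v = (∅ : Set X) := congrArg Subtype.val h
      exact (h' ▸ (hinl v v).mpr rfl : (some (Sum.inl v) : X) ∈ (∅ : Set X))
    · intro h
      have h' : Av v = ((∅ : Set X))ᶜ := congrArg Subtype.val h
      exact hnone v (h' ▸ (Set.mem_compl (by exact fun hc => hc) : (none : X) ∈ (∅ : Set X)ᶜ))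
  · -- injective
    intro v w h
    have h' : Av v = Av w := congrArg Subtype.val h
    exact (hinl v w).mp (h' ▸ (hinl v v).mpr rfl)
  · -- f v ≠ star (f w)
    intro v w h
    have h' : Av v = (Av w)ᶜ := congrArg Subtype.val h
    exact hnone v (h' ▸ Set.mem_compl (hnone w))
  · -- surjective onto proper
    rintro ⟨A, hA⟩ ⟨h1, h2⟩
    rcases hA with rfl | rfl | ⟨v, rfl | rfl⟩
    · exact absurd rfl h1
    · exact absurd (Subtype.ext (by simp [hS])) h2
    · exact ⟨v, Or.inl rfl⟩
    · exact ⟨v, Or.inr rfl⟩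
  · -- transversality
    intro v w hvw
    have c1 : ¬ ((Av v : Set X) ⊆ Av w) := fun h =>
      hvw ((hinl v w).mp (h ((hinl v v).mpr rfl)))
    have c2 : ¬ ((Av w : Set X) ⊆ Av v) := fun h =>
      hvw ((hinl w v).mp (h ((hinl w w).mpr rfl))).symm
    have c4 : ¬ ((Av w)ᶜ ⊆ Av v) := fun h => hnone v (h (hnone w))
    have c3 : (Av v ⊆ (Av w)ᶜ) ↔ ¬ G.Adj v w := by
      constructor
      · intro h hadj
        have he : s(v, w) ∈ G.edgeSet := hadj
        have hv : (some (Sum.inr ⟨_, he⟩) : X) ∈ Av v :=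
          (hinr ⟨_, he⟩ v).mpr (by simp)
        have hw : (some (Sum.inr ⟨_, he⟩) : X) ∈ Av w :=
          (hinr ⟨_, he⟩ w).mpr (by simp)
        exact h hv hw
      · intro hadj x hxv hxw
        rcases hxv with h | ⟨e, rfl, hev⟩
        · subst h
          exact hvw ((hinl v w).mp hxw)
        · have hew : w ∈ (e : Sym2 V) := (hinr e w).mp hxw
          have : (e : Sym2 V) = s(v, w) := ((Sym2.mem_and_mem_iff hvw).mp ⟨hev, hew⟩)
          exact hadj (by rw [← SimpleGraph.mem_edgeSet, ← this]; exact e.2)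
    unfold PocSet.Transverse PocSet.Nested
    simp only [hS, hf]
    constructor
    · intro h
      by_contra hadj
      exact h (Or.inr (Or.inr (Or.inl (c3.mpr hadj))))
    · intro hadj h
      rcases h with h | h | h | h
      · exact c1 h
      · exact c2 h
      · exact (c3.mp h) hadj
      · exact c4 h
end
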